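/- Let T be a triangulation of S. Then every edge {u,v} of T satisfies |lind(u) − lind(v)| ≤ 1. Consequently, for every index i, every path in the graph T from a vertex of layer index strictly less than i to a vertex of layer index strictly greater than i passes through a vertex of layer index exactly i; in particular the vertex set of layer i separates the vertices of smaller layer index from the vertices of larger layer index. -/

import Mathlib

open scoped Classical

noncomputable section

/-- The plane. -/
abbrev Pt : Type := EuclideanSpace ℝ (Fin 2)

/-- The closed segment corresponding to an unordered pair of points. -/
def segOf : Sym2 Pt → Set Pt :=
  Sym2.lift ⟨fun p q => segment ℝ p q, fun p q => segment_symm ℝ p q⟩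

/-- The union of all segments of an edge set. -/
def graphUnion (E : Set (Sym2 Pt)) : Set Pt := ⋃ e ∈ E, segOf e

/-- A plane straight-line graph on the point set `S`: edges are nondegenerate segments with
endpoints in `S`, and any two distinct segments intersect in at most a common endpoint. -/
def IsPlaneGraph (S : Set Pt) (E : Set (Sym2 Pt)) : Prop :=
  (∀ e ∈ E, ¬ e.IsDiag) ∧
  (∀ e ∈ E, ∀ p ∈ e, p ∈ S) ∧
  (∀ e ∈ E, ∀ f ∈ E, e ≠ f → segOf e ∩ segOf f ⊆ {p | p ∈ e ∧ p ∈ f})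

/-- A triangulation of `S`: a maximal plane straight-line graph on `S`. -/
def IsTriangulation (S : Set Pt) (E : Set (Sym2 Pt)) : Prop :=
  IsPlaneGraph S E ∧
  ∀ p ∈ S, ∀ q ∈ S, p ≠ q → IsPlaneGraph S (insert s(p, q) E) → s(p, q) ∈ E

/-- General position: no three distinct points of `S` are collinear. -/
def GenPos (S : Set Pt) : Prop :=
  ∀ p ∈ S, ∀ q ∈ S, ∀ r ∈ S, p ≠ q → p ≠ r → q ≠ r →
    ¬ Collinear ℝ ({p, q, r} : Set Pt)

/-- The unbounded face of a plane set `U`: the union of the unbounded connected components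
of the complement of `U`. -/
def outerFace (U : Set Pt) : Set Pt :=
  {x | x ∉ U ∧ ¬ Bornology.IsBounded (connectedComponentIn Uᶜ x)}

/-- The vertices of the plane graph `(S, E)` incident to the unbounded face. -/
def outerVerts (S : Set Pt) (E : Set (Sym2 Pt)) : Set Pt :=
  {v ∈ S | v ∈ closure (outerFace (graphUnion E))}

/-- The edges of the plane graph `(S, E)` incident to the unbounded face. -/
def outerEdges (S : Set Pt) (E : Set (Sym2 Pt)) : Set (Sym2 Pt) :=
  {e ∈ E | segOf e ⊆ closure (outerFace (graphUnion E))}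

/-- Remove the outermost (cactus) layer: delete the vertices incident to the unbounded face
together with all edges incident to them. -/
def peel : Set Pt × Set (Sym2 Pt) → Set Pt × Set (Sym2 Pt) :=
  fun G => (G.1 \ outerVerts G.1 G.2, {e ∈ G.2 | ∀ p ∈ e, p ∉ outerVerts G.1 G.2})

/-- The vertices of the `i`-th cactus layer (`i ≥ 1`). -/
def layerVerts (S : Set Pt) (E : Set (Sym2 Pt)) (i : ℕ) : Set Pt :=
  outerVerts (peel^[i - 1] (S, E)).1 (peel^[i - 1] (S, E)).2

/-- The edges of the `i`-th cactus layer (`i ≥ 1`). -/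
def layerEdges (S : Set Pt) (E : Set (Sym2 Pt)) (i : ℕ) : Set (Sym2 Pt) :=
  outerEdges (peel^[i - 1] (S, E)).1 (peel^[i - 1] (S, E)).2

/-- The layer index of a vertex: the (first) layer containing it. -/
def lind (S : Set Pt) (E : Set (Sym2 Pt)) (v : Pt) : ℕ :=
  sInf {i | 1 ≤ i ∧ v ∈ layerVerts S E i}

/-- The outerplanar index: the number of nonempty cactus layers. -/
def outerplanarIndex (S : Set Pt) (E : Set (Sym2 Pt)) : ℕ :=
  {i : ℕ | 1 ≤ i ∧ (layerVerts S E i).Nonempty}.ncard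

/-- Adjacency in the plane graph with edge set `E`. -/
def Adj (E : Set (Sym2 Pt)) (p q : Pt) : Prop := p ≠ q ∧ s(p, q) ∈ E

/-- The abstract simple graph underlying the edge set `E`. -/
def graphOf (E : Set (Sym2 Pt)) : SimpleGraph Pt where
  Adj p q := p ≠ q ∧ s(p, q) ∈ E
  symm := by
    constructor
    intro p q h
    exact ⟨h.1.symm, by rw [Sym2.eq_swap]; exact h.2⟩
  loopless := ⟨fun p h => h.1 rfl⟩

end


-- ========================= Auxiliary lemmas =========================

section Aux

lemma sym2_eq (e : Sym2 Pt) : ∃ a b : Pt, e = s(a, b) :=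
  Sym2.ind (fun a b => ⟨a, b, rfl⟩) e

lemma segOf_mk (a b : Pt) : segOf s(a, b) = segment ℝ a b := rfl

lemma mem_graphUnion {E : Set (Sym2 Pt)} {x : Pt} :
    x ∈ graphUnion E ↔ ∃ e ∈ E, x ∈ segOf e := by simp [graphUnion]

lemma isCompact_seg (a b : Pt) : IsCompact (segment ℝ a b) := by
  rw [segment_eq_image']
  exact isCompact_Icc.image (by fun_prop)

lemma isClosed_graphUnion {E : Set (Sym2 Pt)} (hE : E.Finite) :
    IsClosed (graphUnion E) := by
  apply hE.isClosed_biUnion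
  intro e _
  obtain ⟨a, b, rfl⟩ := sym2_eq e
  exact (isCompact_seg a b).isClosed

lemma finite_edges {S : Set Pt} (hfin : S.Finite) {E : Set (Sym2 Pt)}
    (hE : ∀ e ∈ E, ∀ p ∈ e, p ∈ S) : E.Finite := by
  refine ((hfin.prod hfin).image (fun pq : Pt × Pt => s(pq.1, pq.2))).subset ?_
  intro e he
  obtain ⟨a, b, rfl⟩ := sym2_eq e
  exact ⟨(a, b), ⟨hE _ he a (by simp), hE _ he b (by simp)⟩, rfl⟩

lemma collinear_of_mem_segment {x a b : Pt} (h : x ∈ segment ℝ a b) :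
    Collinear ℝ ({x, a, b} : Set Pt) :=
  collinear_insert_of_mem_affineSpan_pair (mem_segment_iff_wbtw.mp h).mem_affineSpan

lemma mem_outerFace_of_subset {U C : Set Pt} (hC : IsPreconnected C) (hCU : C ⊆ Uᶜ)
    (hub : ¬ Bornology.IsBounded C) {y : Pt} (hy : y ∈ C) : y ∈ outerFace U :=
  ⟨hCU hy, fun hb => hub (hb.subset (hC.subset_connectedComponentIn hy hCU))⟩

lemma outerVerts_nonempty (S' : Set Pt) (hfin : S'.Finite) (hne : S'.Nonempty)
    (E' : Set (Sym2 Pt)) (hE : ∀ e ∈ E', ∀ r ∈ e, r ∈ S') :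
    (outerVerts S' E').Nonempty := by
  obtain ⟨w₀, hw₀⟩ := hne
  obtain ⟨v, hv, hmax⟩ := Set.exists_max_image S' (fun x => ‖x - w₀‖) hfin ⟨w₀, hw₀⟩
  have key : ∃ u : Pt, u ≠ 0 ∧ ∀ x ∈ S', (inner ℝ u x : ℝ) ≤ inner ℝ u v := by
    by_cases h : v = w₀
    · refine ⟨EuclideanSpace.single 0 1, ?_, ?_⟩
      · intro h0
        have := congrFun (congrArg (fun f : Pt => (f : Fin 2 → ℝ)) h0) 0
        simp [EuclideanSpace.single] at this
      · intro x hx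
        have h1 : ‖x - w₀‖ ≤ ‖v - w₀‖ := hmax x hx
        rw [h] at h1 ⊢
        have : x = w₀ := by
          rw [sub_self, norm_zero] at h1
          have := norm_nonneg (x - w₀)
          have hx0 : ‖x - w₀‖ = 0 := le_antisymm h1 this
          rwa [norm_eq_zero, sub_eq_zero] at hx0
        rw [this]
    · refine ⟨v - w₀, sub_ne_zero.mpr h, ?_⟩
      intro x hx
      have h1 : (inner ℝ (v - w₀) (x - w₀) : ℝ) ≤ ‖v - w₀‖ * ‖x - w₀‖ := real_inner_le_norm _ _
      have h2 : ‖x - w₀‖ ≤ ‖v - w₀‖ := hmax x hx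
      have h3 : (inner ℝ (v - w₀) (v - w₀) : ℝ) = ‖v - w₀‖ ^ 2 := real_inner_self_eq_norm_sq _
      have e1 : (inner ℝ (v - w₀) (x - w₀) : ℝ) = inner ℝ (v - w₀) x - inner ℝ (v - w₀) w₀ :=
        inner_sub_right _ _ _
      have e2 : (inner ℝ (v - w₀) (v - w₀) : ℝ) = inner ℝ (v - w₀) v - inner ℝ (v - w₀) w₀ :=
        inner_sub_right _ _ _
      have hn : (0:ℝ) ≤ ‖v - w₀‖ := norm_nonneg _
      nlinarith
  obtain ⟨u, hu0, hmaxu⟩ := key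
  set H : Set Pt := {x | (inner ℝ u v : ℝ) < inner ℝ u x} with hH
  have hconv : Convex ℝ H := by
    have hlin : IsLinearMap ℝ (fun x : Pt => (inner ℝ u x : ℝ)) :=
      ⟨fun a b => inner_add_right _ _ _, fun c a => real_inner_smul_right _ _ _⟩
    exact convex_halfSpace_gt hlin _
  have hmem : ∀ t : ℝ, 0 < t → v + t • u ∈ H := by
    intro t ht
    have : (inner ℝ u (v + t • u) : ℝ) = inner ℝ u v + t * (inner ℝ u u : ℝ) := by
      rw [inner_add_right, real_inner_smul_right]
    have hpos : (0:ℝ) < inner ℝ u u := by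
      rw [real_inner_self_eq_norm_sq]
      exact pow_pos (norm_pos_iff.mpr hu0) 2
    show (inner ℝ u v : ℝ) < inner ℝ u (v + t • u)
    rw [this]
    nlinarith
  have hHU : H ⊆ (graphUnion E')ᶜ := by
    intro x hxH hxU
    rw [mem_graphUnion] at hxU
    obtain ⟨e, he, hxe⟩ := hxU
    obtain ⟨a, b, rfl⟩ := sym2_eq e
    have ha : a ∈ S' := hE _ he a (by simp)
    have hb : b ∈ S' := hE _ he b (by simp)
    rw [segOf_mk] at hxe
    obtain ⟨α, β, hα, hβ, hαβ, rfl⟩ := hxe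
    have h1 : (inner ℝ u a : ℝ) ≤ inner ℝ u v := hmaxu a ha
    have h2 : (inner ℝ u b : ℝ) ≤ inner ℝ u v := hmaxu b hb
    have h3 : (inner ℝ u (α • a + β • b) : ℝ) = α * inner ℝ u a + β * inner ℝ u b := by
      rw [inner_add_right, real_inner_smul_right, real_inner_smul_right]
    have hxH' : (inner ℝ u v : ℝ) < inner ℝ u (α • a + β • b) := hxH
    rw [h3] at hxH'
    have hs := add_le_add (mul_le_mul_of_nonneg_left h1 hα) (mul_le_mul_of_nonneg_left h2 hβ)
    have he' : α * (inner ℝ u v : ℝ) + β * inner ℝ u v = inner ℝ u v := by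
      rw [← add_mul, hαβ, one_mul]
    linarith
  have hub : ¬ Bornology.IsBounded H := by
    intro hb
    obtain ⟨r, hr⟩ := (Metric.isBounded_iff_subset_closedBall 0).mp hb
    have hun : (0:ℝ) < ‖u‖ := norm_pos_iff.mpr hu0
    set t : ℝ := (max r 0 + ‖v‖ + 1) / ‖u‖ with ht
    have ht0 : 0 < t := by positivity
    have hmem' := hr (hmem t ht0)
    rw [Metric.mem_closedBall, dist_zero_right] at hmem'
    have h1 : ‖t • u‖ = t * ‖u‖ := by rw [norm_smul, Real.norm_eq_abs, abs_of_pos ht0]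
    have h2 : t * ‖u‖ = max r 0 + ‖v‖ + 1 := by
      rw [ht, div_mul_cancel₀ _ (ne_of_gt hun)]
    have h3 : ‖t • u‖ ≤ ‖v + t • u‖ + ‖v‖ := by
      have h4 : ‖(v + t • u) - v‖ ≤ ‖v + t • u‖ + ‖v‖ := norm_sub_le _ _
      have h5 : (v + t • u) - v = t • u := by abel
      rwa [h5] at h4
    have : r ≤ max r 0 := le_max_left _ _
    linarith
  have hHout : H ⊆ outerFace (graphUnion E') := fun y hy =>
    mem_outerFace_of_subset hconv.isPreconnected hHU hub hy
  refine ⟨v, hv, ?_⟩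
  have : v ∈ closure H := by
    rw [Metric.mem_closure_iff]
    intro ε hε
    have hun : (0:ℝ) < ‖u‖ := norm_pos_iff.mpr hu0
    refine ⟨v + (ε / (2 * ‖u‖)) • u, hmem _ (by positivity), ?_⟩
    have : dist v (v + (ε / (2 * ‖u‖)) • u) = ‖(ε / (2 * ‖u‖)) • u‖ := by
      rw [dist_eq_norm]
      have h5 : v - (v + (ε / (2 * ‖u‖)) • u) = -((ε / (2 * ‖u‖)) • u) := by abel
      rw [h5, norm_neg]
    rw [this, norm_smul, Real.norm_eq_abs, abs_of_pos (by positivity)]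
    have : ε / (2 * ‖u‖) * ‖u‖ = ε / 2 := by
      field_simp
    rw [this]; linarith
  exact closure_mono hHout this

/-- Main geometric step: if `p` is an outer vertex and `pq` is an edge, then after peeling
the outer layer, `q` (if it survives) is an outer vertex of the peeled graph. -/
lemma step_lemma (S : Set Pt) (E : Set (Sym2 Pt))
    (hgp : GenPos S)
    (hnd : ∀ e ∈ E, ¬ e.IsDiag)
    (hES : ∀ e ∈ E, ∀ r ∈ e, r ∈ S)
    (hcross : ∀ e ∈ E, ∀ f ∈ E, e ≠ f → segOf e ∩ segOf f ⊆ {x | x ∈ e ∧ x ∈ f})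
    (hfinE : E.Finite)
    (S' : Set Pt) (E' : Set (Sym2 Pt)) (hS' : S' ⊆ S) (hE' : E' ⊆ E)
    (hES' : ∀ e ∈ E', ∀ r ∈ e, r ∈ S')
    (p q : Pt) (hpq : s(p, q) ∈ E') (hnepq : p ≠ q)
    (hp : p ∈ outerVerts S' E') (hq : q ∈ S' \ outerVerts S' E') :
    q ∈ outerVerts (S' \ outerVerts S' E') {e ∈ E' | ∀ r ∈ e, r ∉ outerVerts S' E'} := by
  set V := outerVerts S' E' with hV
  set Enew := {e ∈ E' | ∀ r ∈ e, r ∉ V} with hEnew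
  set Unew := graphUnion Enew with hUnew
  set Uold := graphUnion E' with hUold
  have hEnewE' : Enew ⊆ E' := fun e he => he.1
  have hUsub : Unew ⊆ Uold := by
    intro x hx
    rw [mem_graphUnion] at hx ⊢
    obtain ⟨e, he, hxe⟩ := hx
    exact ⟨e, hEnewE' he, hxe⟩
  -- p is not on the new graph
  have hpU : p ∉ Unew := by
    intro hx
    rw [mem_graphUnion] at hx
    obtain ⟨e, he, hxe⟩ := hx
    obtain ⟨a, b, rfl⟩ := sym2_eq e
    have ha : a ∉ V := he.2 a (by simp)
    have hb : b ∉ V := he.2 b (by simp)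
    have haS : a ∈ S' := hES' _ he.1 a (by simp)
    have hbS : b ∈ S' := hES' _ he.1 b (by simp)
    have hpa : p ≠ a := fun h => ha (h ▸ hp)
    have hpb : p ≠ b := fun h => hb (h ▸ hp)
    have hab : a ≠ b := by
      intro h
      exact hnd _ (hE' he.1) (by rw [h, Sym2.isDiag_iff_proj_eq])
    rw [segOf_mk] at hxe
    exact hgp p (hS' hp.1) a (hS' haS) b (hS' hbS) hpa hpb hab (collinear_of_mem_segment hxe)
  -- interior points of segment pq are not on the new graph
  have hseg : ∀ x ∈ segment ℝ p q, x ≠ p → x ≠ q → x ∉ Unew := by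
    intro x hx hxp hxq hxU
    rw [mem_graphUnion] at hxU
    obtain ⟨e, he, hxe⟩ := hxU
    have hne : e ≠ s(p, q) := by
      intro h
      exact (he.2 p (h ▸ (by simp : p ∈ s(p, q)))) hp
    have := hcross e (hE' he.1) s(p, q) (hE' hpq) hne ⟨hxe, by rwa [segOf_mk]⟩
    have hx2 : x ∈ s(p, q) := this.2
    rw [Sym2.mem_iff] at hx2
    tauto
  -- the new graph is closed, so p has a ball avoiding it
  have hclosed : IsClosed Unew := isClosed_graphUnion (hfinE.subset (hEnewE'.trans hE'))
  obtain ⟨ε, hε, hball⟩ : ∃ ε > 0, Metric.ball p ε ⊆ Unewᶜ := by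
    have := hclosed.isOpen_compl
    rw [Metric.isOpen_iff] at this
    obtain ⟨ε, hε, h⟩ := this p hpU
    exact ⟨ε, hε, h⟩
  -- a point of the old outer face near p
  obtain ⟨x₀, hx₀F, hx₀d⟩ : ∃ x₀ ∈ outerFace Uold, dist p x₀ < ε := by
    have := hp.2
    rw [Metric.mem_closure_iff] at this
    exact this ε hε
  set A := connectedComponentIn Uoldᶜ x₀ with hA
  have hAub : ¬ Bornology.IsBounded A := hx₀F.2
  have hAsub : A ⊆ Unewᶜ := (connectedComponentIn_subset _ _).trans (Set.compl_subset_compl.mpr hUsub)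
  have hx₀A : x₀ ∈ A := mem_connectedComponentIn hx₀F.1
  -- points y t on the segment near q are in new outer face
  have hyt : ∀ t : ℝ, 0 ≤ t → t < 1 → p + t • (q - p) ∈ outerFace Unew := by
    intro t ht0 ht1
    set y := p + t • (q - p) with hy
    have hsegy : segment ℝ p y ⊆ Unewᶜ := by
      intro x hx
      rw [segment_eq_image'] at hx
      obtain ⟨s, hs, rfl⟩ := hx
      have hxeq : p + s • (y - p) = p + (s * t) • (q - p) := by
        rw [hy]; module
      show p + s • (y - p) ∈ Unewᶜ
      rw [hxeq]
      by_cases hxp : p + (s * t) • (q - p) = p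
      · rw [hxp]; exact hpU
      · have hst0 : 0 ≤ s * t := mul_nonneg hs.1 ht0
        have hst1 : s * t < 1 := lt_of_le_of_lt (mul_le_of_le_one_left ht0 hs.2) ht1
        have hmem : p + (s * t) • (q - p) ∈ segment ℝ p q := by
          rw [segment_eq_image']
          exact ⟨s * t, ⟨hst0, le_of_lt hst1⟩, rfl⟩
        have hxq : p + (s * t) • (q - p) ≠ q := by
          intro h
          have h0 : (1 - s * t) • (q - p) = q - (p + (s * t) • (q - p)) := by module
          rw [h, sub_self] at h0
          rcases smul_eq_zero.mp h0 with h1 | h2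
          · have : s * t = 1 := by linarith [sub_eq_zero.mp (by linarith : 1 - s * t = 0)]
            linarith
          · exact hnepq (sub_eq_zero.mp h2).symm
        exact hseg _ hmem hxp hxq
    have hsegpre : IsPreconnected (Metric.ball p ε ∪ segment ℝ p y) :=
      IsPreconnected.union p (Metric.mem_ball_self hε) (left_mem_segment ℝ p y)
        (convex_ball p ε).isPreconnected (convex_segment p y).isPreconnected
    have hx₀ball : x₀ ∈ Metric.ball p ε := by rwa [Metric.mem_ball, dist_comm]
    have hCpre : IsPreconnected (A ∪ (Metric.ball p ε ∪ segment ℝ p y)) :=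
      IsPreconnected.union x₀ hx₀A (Or.inl hx₀ball) isPreconnected_connectedComponentIn hsegpre
    have hCsub : A ∪ (Metric.ball p ε ∪ segment ℝ p y) ⊆ Unewᶜ := by
      intro x hx
      rcases hx with hx | hx | hx
      · exact hAsub hx
      · exact hball hx
      · exact hsegy hx
    have hCub : ¬ Bornology.IsBounded (A ∪ (Metric.ball p ε ∪ segment ℝ p y)) := by
      intro h
      exact hAub (h.subset Set.subset_union_left)
    exact mem_outerFace_of_subset hCpre hCsub hCub
      (Or.inr (Or.inr (right_mem_segment ℝ p y)))
  -- q is in the closure of the new outer face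
  refine ⟨hq, ?_⟩
  rw [Metric.mem_closure_iff]
  intro δ hδ
  have hqp : (0:ℝ) < ‖q - p‖ := by
    rw [norm_pos_iff, sub_ne_zero]
    exact hnepq.symm
  set m : ℝ := min (δ / (2 * ‖q - p‖)) (1/2) with hm
  have hm0 : 0 < m := lt_min (by positivity) (by norm_num)
  have hm1 : m ≤ 1/2 := min_le_right _ _
  set t : ℝ := 1 - m with htdef
  have ht0 : 0 ≤ t := by rw [htdef]; linarith
  have ht1 : t < 1 := by rw [htdef]; linarith
  refine ⟨p + t • (q - p), hyt t ht0 ht1, ?_⟩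
  have : q - (p + t • (q - p)) = (1 - t) • (q - p) := by module
  rw [dist_eq_norm, this, norm_smul, Real.norm_eq_abs, abs_of_pos (by rw [htdef]; linarith)]
  have h1t : 1 - t = m := by rw [htdef]; ring
  rw [h1t]
  have : m * ‖q - p‖ ≤ δ / (2 * ‖q - p‖) * ‖q - p‖ :=
    mul_le_mul_of_nonneg_right (min_le_left _ _) (le_of_lt hqp)
  have h2 : δ / (2 * ‖q - p‖) * ‖q - p‖ = δ / 2 := by field_simp
  rw [h2] at this
  linarith

lemma outerVerts_subset (S' : Set Pt) (E' : Set (Sym2 Pt)) : outerVerts S' E' ⊆ S' :=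
  fun _ h => h.1

lemma iter_succ (S : Set Pt) (E : Set (Sym2 Pt)) (k : ℕ) :
    peel^[k + 1] (S, E) = peel (peel^[k] (S, E)) :=
  Function.iterate_succ_apply' _ _ _

lemma peel_inv (S : Set Pt) (E : Set (Sym2 Pt))
    (hES : ∀ e ∈ E, ∀ r ∈ e, r ∈ S) : ∀ k : ℕ,
    (peel^[k] (S, E)).1 ⊆ S ∧ (peel^[k] (S, E)).2 ⊆ E ∧
      (∀ e ∈ (peel^[k] (S, E)).2, ∀ r ∈ e, r ∈ (peel^[k] (S, E)).1) := by
  intro k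
  induction k with
  | zero => exact ⟨subset_rfl, subset_rfl, hES⟩
  | succ k ih =>
    rw [iter_succ]
    refine ⟨?_, ?_, ?_⟩
    · exact (Set.diff_subset).trans ih.1
    · exact (Set.sep_subset _ _).trans ih.2.1
    · intro e he r hr
      exact ⟨ih.2.2 e he.1 r hr, he.2 r hr⟩

lemma edge_mem_iter (S : Set Pt) (E : Set (Sym2 Pt)) (p q : Pt) (hpq : s(p, q) ∈ E) :
    ∀ k : ℕ, p ∈ (peel^[k] (S, E)).1 → q ∈ (peel^[k] (S, E)).1 →
      s(p, q) ∈ (peel^[k] (S, E)).2 := by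
  intro k
  induction k with
  | zero => exact fun _ _ => hpq
  | succ k ih =>
    rw [iter_succ]
    intro hp hq
    refine ⟨ih hp.1 hq.1, ?_⟩
    intro r hr
    rcases Sym2.mem_iff.mp hr with rfl | rfl
    · exact hp.2
    · exact hq.2

lemma layer_succ (S : Set Pt) (E : Set (Sym2 Pt)) (k : ℕ) :
    layerVerts S E (k + 1) = outerVerts (peel^[k] (S, E)).1 (peel^[k] (S, E)).2 := by
  simp [layerVerts]

lemma mem_iter_iff (S : Set Pt) (E : Set (Sym2 Pt)) : ∀ (k : ℕ) (v : Pt),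
    v ∈ (peel^[k] (S, E)).1 ↔ v ∈ S ∧ ∀ j < k, v ∉ layerVerts S E (j + 1) := by
  intro k
  induction k with
  | zero => intro v; simp
  | succ k ih =>
    intro v
    rw [iter_succ]
    constructor
    · intro hv
      obtain ⟨hv1, hv2⟩ := hv
      obtain ⟨hvS, hvl⟩ := (ih v).mp hv1
      refine ⟨hvS, ?_⟩
      intro j hj
      rcases Nat.lt_succ_iff_lt_or_eq.mp hj with h | rfl
      · exact hvl j h
      · rw [layer_succ]; exact hv2
    · intro ⟨hvS, hvl⟩
      refine ⟨(ih v).mpr ⟨hvS, fun j hj => hvl j (hj.trans (Nat.lt_succ_self _))⟩, ?_⟩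
      have := hvl k (Nat.lt_succ_self _)
      rwa [layer_succ] at this

lemma total_aux (S : Set Pt) (E : Set (Sym2 Pt)) (hfin : S.Finite)
    (hES : ∀ e ∈ E, ∀ r ∈ e, r ∈ S) :
    ∀ (n k : ℕ) (v : Pt), ((peel^[k] (S, E)).1).ncard < n → v ∈ (peel^[k] (S, E)).1 →
      ∃ i, k + 1 ≤ i ∧ v ∈ layerVerts S E i := by
  intro n
  induction n with
  | zero => intro k v h; omega
  | succ n ih =>
    intro k v hcard hv
    have hinv := peel_inv S E hES k
    have hfink : ((peel^[k] (S, E)).1).Finite := hfin.subset hinv.1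
    have houter := outerVerts_nonempty (peel^[k] (S, E)).1 hfink ⟨v, hv⟩
      (peel^[k] (S, E)).2 hinv.2.2
    by_cases hvo : v ∈ outerVerts (peel^[k] (S, E)).1 (peel^[k] (S, E)).2
    · exact ⟨k + 1, le_refl _, by rw [layer_succ]; exact hvo⟩
    · have hvnext : v ∈ (peel^[k + 1] (S, E)).1 := by
        rw [iter_succ]; exact ⟨hv, hvo⟩
      have hss : (peel^[k + 1] (S, E)).1 ⊂ (peel^[k] (S, E)).1 := by
        rw [iter_succ]
        refine ⟨Set.diff_subset, fun hsub => ?_⟩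
        obtain ⟨w, hw⟩ := houter
        exact (hsub (outerVerts_subset _ _ hw)).2 hw
      have hlt : ((peel^[k + 1] (S, E)).1).ncard < ((peel^[k] (S, E)).1).ncard :=
        Set.ncard_lt_ncard hss hfink
      obtain ⟨i, hi, hmem⟩ := ih (k + 1) v (by omega) hvnext
      exact ⟨i, by omega, hmem⟩

lemma lind_total (S : Set Pt) (E : Set (Sym2 Pt)) (hfin : S.Finite)
    (hES : ∀ e ∈ E, ∀ r ∈ e, r ∈ S) {v : Pt} (hv : v ∈ S) :
    {i | 1 ≤ i ∧ v ∈ layerVerts S E i}.Nonempty := by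
  have hv0 : v ∈ (peel^[0] (S, E)).1 := hv
  obtain ⟨i, hi, hmem⟩ := total_aux S E hfin hES (S.ncard + 1) 0 v
    (Nat.lt_succ_self S.ncard) hv0
  exact ⟨i, by omega, hmem⟩

lemma lind_spec (S : Set Pt) (E : Set (Sym2 Pt)) (hfin : S.Finite)
    (hES : ∀ e ∈ E, ∀ r ∈ e, r ∈ S) {v : Pt} (hv : v ∈ S) :
    1 ≤ lind S E v ∧ v ∈ layerVerts S E (lind S E v) :=
  Nat.sInf_mem (lind_total S E hfin hES hv)

lemma lind_le (S : Set Pt) (E : Set (Sym2 Pt)) {v : Pt} {i : ℕ}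
    (h1 : 1 ≤ i) (h2 : v ∈ layerVerts S E i) : lind S E v ≤ i :=
  Nat.sInf_le ⟨h1, h2⟩

lemma mem_iter_iff_lind (S : Set Pt) (E : Set (Sym2 Pt)) (hfin : S.Finite)
    (hES : ∀ e ∈ E, ∀ r ∈ e, r ∈ S) {v : Pt} (hv : v ∈ S) (k : ℕ) :
    v ∈ (peel^[k] (S, E)).1 ↔ k < lind S E v := by
  obtain ⟨h1, h2⟩ := lind_spec S E hfin hES hv
  constructor
  · intro hvk
    by_contra hc
    push_neg at hc
    obtain ⟨hvS, hvl⟩ := (mem_iter_iff S E k v).mp hvk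
    obtain ⟨j, hj⟩ : ∃ j, lind S E v = j + 1 := ⟨lind S E v - 1, by omega⟩
    rw [hj] at h2
    exact hvl j (by omega) h2
  · intro hk
    refine (mem_iter_iff S E k v).mpr ⟨hv, fun j hj hmem => ?_⟩
    have := lind_le S E (by omega) hmem
    omega

lemma lind_adj (S : Set Pt) (E : Set (Sym2 Pt)) (hfin : S.Finite) (hgp : GenPos S)
    (hT : IsTriangulation S E) (p q : Pt) (hpq : s(p, q) ∈ E) :
    lind S E q ≤ lind S E p + 1 := by
  obtain ⟨hnd, hES, hcross⟩ := hT.1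
  have hpS : p ∈ S := hES _ hpq p (by simp)
  have hqS : q ∈ S := hES _ hpq q (by simp)
  have hnepq : p ≠ q := by
    intro h
    exact hnd _ hpq (by rw [h, Sym2.isDiag_iff_proj_eq])
  by_contra hc
  push_neg at hc
  obtain ⟨hp1, hpmem⟩ := lind_spec S E hfin hES hpS
  obtain ⟨k', hk'⟩ : ∃ k', lind S E p = k' + 1 := ⟨lind S E p - 1, by omega⟩
  have hinv := peel_inv S E hES k'
  have hpk : p ∈ (peel^[k'] (S, E)).1 :=
    (mem_iter_iff_lind S E hfin hES hpS k').mpr (by omega)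
  have hqk : q ∈ (peel^[k'] (S, E)).1 :=
    (mem_iter_iff_lind S E hfin hES hqS k').mpr (by omega)
  have hqk1 : q ∈ (peel^[k' + 1] (S, E)).1 :=
    (mem_iter_iff_lind S E hfin hES hqS (k' + 1)).mpr (by omega)
  have hedge : s(p, q) ∈ (peel^[k'] (S, E)).2 := edge_mem_iter S E p q hpq k' hpk hqk
  have hpout : p ∈ outerVerts (peel^[k'] (S, E)).1 (peel^[k'] (S, E)).2 := by
    rw [← layer_succ, ← hk']
    exact hpmem
  have hqd : q ∈ (peel^[k'] (S, E)).1 \ outerVerts (peel^[k'] (S, E)).1 (peel^[k'] (S, E)).2 := by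
    have := hqk1
    rwa [iter_succ] at this
  have hstep := step_lemma S E hgp hnd hES hcross (finite_edges hfin hES)
    (peel^[k'] (S, E)).1 (peel^[k'] (S, E)).2 hinv.1 hinv.2.1 hinv.2.2
    p q hedge hnepq hpout hqd
  have hlayer : q ∈ layerVerts S E (k' + 2) := by
    rw [layer_succ, iter_succ]
    exact hstep
  have := lind_le S E (by omega) hlayer
  omega

end Aux

/-- layer indices of adjacent vertices differ by at most one, and layer `i`
separates the vertices of smaller layer index from those of larger layer index. -/
theorem layer_index_lipschitz_and_separation
    (S : Set Pt) (hfin : S.Finite) (hgp : GenPos S)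
    (E : Set (Sym2 Pt)) (hT : IsTriangulation S E) :
    (∀ p q : Pt, Adj E p q →
      (lind S E p : ℤ) - lind S E q ≤ 1 ∧ (lind S E q : ℤ) - lind S E p ≤ 1) ∧
    (∀ i : ℕ, ∀ a b : Pt, ∀ w : (graphOf E).Walk a b,
      lind S E a < i → i < lind S E b → ∃ x ∈ w.support, lind S E x = i) := by
  obtain ⟨hnd, hES, hcross⟩ := hT.1
  constructor
  · intro p q hadj
    have h1 : lind S E q ≤ lind S E p + 1 := lind_adj S E hfin hgp hT p q hadj.2
    have h2 : lind S E p ≤ lind S E q + 1 := by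
      refine lind_adj S E hfin hgp hT q p ?_
      rw [Sym2.eq_swap]
      exact hadj.2
    constructor <;> omega
  · intro i a b w
    induction w with
    | nil =>
      intro h1 h2
      exact absurd (h1.trans h2) (lt_irrefl _)
    | @cons u v' w' h p ih =>
      intro h1 h2
      rcases lt_trichotomy (lind S E v') i with hlt | heq | hgt
      · obtain ⟨x, hx, hxe⟩ := ih hlt h2
        exact ⟨x, by rw [SimpleGraph.Walk.support_cons]; exact List.mem_cons_of_mem _ hx, hxe⟩
      · refine ⟨v', ?_, heq⟩
        rw [SimpleGraph.Walk.support_cons]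
        exact List.mem_cons_of_mem _ p.start_mem_support
      · have := lind_adj S E hfin hgp hT u v' (show u ≠ v' ∧ s(u, v') ∈ E from h).2
        omega
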